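/- Let (x*, y*, w*, z*, s*) be an extreme point of P = conv(Q) and let t ∈ {1, …, T} be a time period with Σ_{v∈𝒱} y*_{v,t} = s*_{t−1} (where s*_0 = s₀). Then at most one vendor v ∈ 𝒱 has a purchase quantity x*_{v,t} not belonging to {0, L^x_{v,t}, U^x_{v,t}}. -/

import Mathlib

open scoped BigOperators

/-- A point of the warehouse problem: purchases `x`, sales `y`,
purchase indicators `w`, sale indicators `z` (all indexed by vendor and time),
and stock levels `s` (indexed by time). -/
abbrev WPoint (V T : ℕ) :=
  (Fin V → Fin T → ℝ) × (Fin V → Fin T → ℝ) × (Fin V → Fin T → ℝ) ×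
    (Fin V → Fin T → ℝ) × (Fin T → ℝ)

namespace WPoint

variable {V T : ℕ}

def x (p : WPoint V T) : Fin V → Fin T → ℝ := p.1
def y (p : WPoint V T) : Fin V → Fin T → ℝ := p.2.1
def w (p : WPoint V T) : Fin V → Fin T → ℝ := p.2.2.1
def z (p : WPoint V T) : Fin V → Fin T → ℝ := p.2.2.2.1
def s (p : WPoint V T) : Fin T → ℝ := p.2.2.2.2

end WPoint

/-- A selector of one of the `x`/`y` decision variables. -/
structure WVar (V T : ℕ) where
  isX : Bool
  v : Fin V
  t : Fin T

/-- The value of the selected variable. -/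
def WVar.val {V T : ℕ} (x y : Fin V → Fin T → ℝ) (u : WVar V T) : ℝ :=
  if u.isX then x u.v u.t else y u.v u.t

/-- The lower bound of the selected variable. -/
def WVar.lb {V T : ℕ} (Lx Ly : Fin V → Fin T → ℝ) (u : WVar V T) : ℝ :=
  if u.isX then Lx u.v u.t else Ly u.v u.t

/-- The upper bound of the selected variable. -/
def WVar.ub {V T : ℕ} (Ux Uy : Fin V → Fin T → ℝ) (u : WVar V T) : ℝ :=
  if u.isX then Ux u.v u.t else Uy u.v u.t

/-- A generalized complementarity constraint `(V₁ - B₁)(V₂ - B₂) = 0`. -/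
structure CompCon (V T : ℕ) where
  V1 : WVar V T
  V2 : WVar V T
  B1 : ℝ
  B2 : ℝ

/-- Validity of a complementarity tuple: the time index of `V₁` is at most that of `V₂`,
and each constant is zero or the lower or upper bound of the corresponding variable. -/
def ValidCompCon {V T : ℕ} (Lx Ux Ly Uy : Fin V → Fin T → ℝ) (c : CompCon V T) : Prop :=
  c.V1.t ≤ c.V2.t ∧
  (c.B1 = 0 ∨ c.B1 = c.V1.lb Lx Ly ∨ c.B1 = c.V1.ub Ux Uy) ∧
  (c.B2 = 0 ∨ c.B2 = c.V2.lb Lx Ly ∨ c.B2 = c.V2.ub Ux Uy)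

/-- The stock level at the end of period `t - 1` (the initial stock `s0` when `t = 1`). -/
def prevStock {T : ℕ} (s0 : ℝ) (s : Fin T → ℝ) (t : Fin T) : ℝ :=
  if _ : (t : ℕ) = 0 then s0 else s ⟨(t : ℕ) - 1, lt_of_le_of_lt (Nat.sub_le _ _) t.isLt⟩

/-- The feasible region `Q` of the warehouse problem. -/
def Qset {V T : ℕ} (s0 : ℝ) (Ls Us : Fin T → ℝ) (Lx Ux Ly Uy : Fin V → Fin T → ℝ)
    (C : Finset (CompCon V T)) : Set (WPoint V T) :=
  { p | (∀ t, p.s t = prevStock s0 p.s t - ∑ v, p.y v t + ∑ v, p.x v t) ∧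
        (∀ t, Ls t ≤ p.s t ∧ p.s t ≤ Us t) ∧
        (∀ t, ∑ v, p.y v t ≤ prevStock s0 p.s t) ∧
        (∀ c ∈ C, (c.V1.val p.x p.y - c.B1) * (c.V2.val p.x p.y - c.B2) = 0) ∧
        (∀ v t, Ly v t * p.z v t ≤ p.y v t ∧ p.y v t ≤ Uy v t * p.z v t) ∧
        (∀ v t, Lx v t * p.w v t ≤ p.x v t ∧ p.x v t ≤ Ux v t * p.w v t) ∧
        (∀ v t, p.w v t = 0 ∨ p.w v t = 1) ∧
        (∀ v t, p.z v t = 0 ∨ p.z v t = 1) }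

/-- The set `S` of candidate extreme stock levels. -/
def Sset {V T : ℕ} (s0 : ℝ) (Ls Us : Fin T → ℝ) (Lx Ux Ly Uy : Fin V → Fin T → ℝ) :
    Set ℝ :=
  { r | ∃ (K : ℝ) (lam : Fin 4 → Fin V → Fin T → ℝ),
      (K = 0 ∨ K = s0 ∨ (∃ t, K = Ls t) ∨ (∃ t, K = Us t)) ∧
      (∀ j v t, lam j v t = -1 ∨ lam j v t = 0 ∨ lam j v t = 1) ∧
      r = K - ∑ t, ∑ v,
        (lam 0 v t * Ly v t + lam 1 v t * Uy v t + lam 2 v t * Lx v t + lam 3 v t * Ux v t) }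

/-- Perturbation of the purchases of two vendors at a single time period. -/
def pert {V T : ℕ} (p : WPoint V T) (a b : Fin V) (t : Fin T) (ε : ℝ) : WPoint V T :=
  (fun v' t' => p.1 v' t' +
      ε * (((if v' = a then (1:ℝ) else 0) - if v' = b then 1 else 0) *
        (if t' = t then 1 else 0)),
    p.2.1, p.2.2.1, p.2.2.2.1, p.2.2.2.2)

lemma pert_sum {V T : ℕ} (p : WPoint V T) (a b : Fin V) (t : Fin T) (ε : ℝ) (t' : Fin T) :
    ∑ v, (pert p a b t ε).1 v t' = ∑ v, p.1 v t' := by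
  show ∑ v : Fin V, (p.1 v t' +
      ε * (((if v = a then (1:ℝ) else 0) - if v = b then 1 else 0) *
        (if t' = t then 1 else 0))) = ∑ v, p.1 v t'
  rw [Finset.sum_add_distrib]
  have h : ∑ v : Fin V, ε * (((if v = a then (1:ℝ) else 0) - if v = b then 1 else 0) *
      (if t' = t then 1 else 0)) = 0 := by
    rw [← Finset.mul_sum, ← Finset.sum_mul, Finset.sum_sub_distrib]
    simp
  rw [h, add_zero]

lemma pert_avg {V T : ℕ} (p : WPoint V T) (a b : Fin V) (t : Fin T) (ε : ℝ) :
    (1/2 : ℝ) • pert p a b t ε + (1/2 : ℝ) • pert p a b t (-ε) = p := by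
  refine Prod.ext ?_ ?_
  · funext v' t'
    show (1/2 : ℝ) * (pert p a b t ε).1 v' t' + (1/2 : ℝ) * (pert p a b t (-ε)).1 v' t'
        = p.1 v' t'
    show (1/2 : ℝ) * (p.1 v' t' +
        ε * (((if v' = a then (1:ℝ) else 0) - if v' = b then 1 else 0) *
          (if t' = t then 1 else 0))) +
      (1/2 : ℝ) * (p.1 v' t' +
        (-ε) * (((if v' = a then (1:ℝ) else 0) - if v' = b then 1 else 0) *
          (if t' = t then 1 else 0))) = p.1 v' t'
    ring
  · show (1/2 : ℝ) • p.2 + (1/2 : ℝ) • p.2 = p.2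
    rw [← add_smul]
    norm_num

lemma pert_mem {V T : ℕ} (s0 : ℝ) (Ls Us : Fin T → ℝ) (Lx Ux Ly Uy : Fin V → Fin T → ℝ)
    (C : Finset (CompCon V T)) (hC : ∀ c ∈ C, ValidCompCon Lx Ux Ly Uy c)
    (p : WPoint V T) (hpQ : p ∈ Qset s0 Ls Us Lx Ux Ly Uy C)
    (a b : Fin V) (t : Fin T) (hab : a ≠ b) (ε : ℝ)
    (hwa : WPoint.w p a t = 1) (hwb : WPoint.w p b t = 1)
    (hfa : WPoint.x p a t ≠ 0 ∧ WPoint.x p a t ≠ Lx a t ∧ WPoint.x p a t ≠ Ux a t)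
    (hfb : WPoint.x p b t ≠ 0 ∧ WPoint.x p b t ≠ Lx b t ∧ WPoint.x p b t ≠ Ux b t)
    (h1 : Lx a t ≤ WPoint.x p a t + ε) (h2 : WPoint.x p a t + ε ≤ Ux a t)
    (h3 : Lx b t ≤ WPoint.x p b t - ε) (h4 : WPoint.x p b t - ε ≤ Ux b t) :
    pert p a b t ε ∈ Qset s0 Ls Us Lx Ux Ly Uy C := by
  obtain ⟨hbal, hsb, hyb, hcomp, hyz, hxw, hw01, hz01⟩ := hpQ
  refine ⟨?_, hsb, hyb, ?_, hyz, ?_, hw01, hz01⟩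
  · intro t'
    show WPoint.s p t' = prevStock s0 (WPoint.s p) t' - ∑ v, WPoint.y p v t'
        + ∑ v, (pert p a b t ε).1 v t'
    rw [pert_sum]
    exact hbal t'
  · intro c hc
    obtain ⟨-, hB1, hB2⟩ := hC c hc
    have hval : ∀ (u : WVar V T) (B : ℝ), (B = 0 ∨ B = u.lb Lx Ly ∨ B = u.ub Ux Uy) →
        u.val (WPoint.x p) (WPoint.y p) = B →
        u.val (WPoint.x (pert p a b t ε)) (WPoint.y (pert p a b t ε)) = B := by
      intro u B hB hpB
      obtain ⟨ux, uv, ut⟩ := u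
      cases ux with
      | false =>
        simp only [WVar.val, Bool.false_eq_true, if_false] at hpB ⊢
        exact hpB
      | true =>
        simp only [WVar.val, if_true] at hpB ⊢
        simp only [WVar.lb, WVar.ub, if_true] at hB
        show WPoint.x p uv ut +
            ε * (((if uv = a then (1:ℝ) else 0) - if uv = b then 1 else 0) *
              (if ut = t then 1 else 0)) = B
        by_cases hut : ut = t
        · subst hut
          by_cases hua : uv = a
          · subst hua
            exfalso
            rcases hB with h | h | h
            · exact hfa.1 (hpB.trans h)
            · exact hfa.2.1 (hpB.trans h)
            · exact hfa.2.2 (hpB.trans h)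
          · by_cases hub : uv = b
            · subst hub
              exfalso
              rcases hB with h | h | h
              · exact hfb.1 (hpB.trans h)
              · exact hfb.2.1 (hpB.trans h)
              · exact hfb.2.2 (hpB.trans h)
            · simp only [hua, hub, if_false]
              rw [hpB]; ring
        · simp only [hut, if_false]
          rw [hpB]; ring
    rcases mul_eq_zero.mp (hcomp c hc) with h | h
    · rw [sub_eq_zero] at h
      rw [hval c.V1 c.B1 hB1 h, sub_self, zero_mul]
    · rw [sub_eq_zero] at h
      rw [hval c.V2 c.B2 hB2 h, sub_self, mul_zero]
  · intro v' t'
    show Lx v' t' * WPoint.w p v' t' ≤ (pert p a b t ε).1 v' t' ∧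
        (pert p a b t ε).1 v' t' ≤ Ux v' t' * WPoint.w p v' t'
    show Lx v' t' * WPoint.w p v' t' ≤ WPoint.x p v' t' +
        ε * (((if v' = a then (1:ℝ) else 0) - if v' = b then 1 else 0) *
          (if t' = t then 1 else 0)) ∧
      WPoint.x p v' t' +
        ε * (((if v' = a then (1:ℝ) else 0) - if v' = b then 1 else 0) *
          (if t' = t then 1 else 0)) ≤ Ux v' t' * WPoint.w p v' t'
    by_cases ht' : t' = t
    · subst ht'
      by_cases hv : v' = a
      · subst hv
        simp only [eq_self_iff_true, if_true, if_neg hab, hwa, mul_one, sub_zero, one_mul]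
        constructor <;> linarith
      · by_cases hv2 : v' = b
        · subst hv2
          simp only [eq_self_iff_true, if_true, if_neg hv, hwb, mul_one, zero_sub, neg_one_mul]
          constructor <;> linarith
        · simp only [if_neg hv, if_neg hv2, sub_self, zero_mul, mul_zero, add_zero]
          exact hxw v' t'
    · simp only [if_neg ht', mul_zero, add_zero]
      exact hxw v' t'


/-- At an extreme point of `P = conv(Q)`, if total sales at time `t` equal
the previous stock level, then at most one vendor's purchase quantity `x*_{v,t}` fails to be
at zero or at its lower or upper bound. -/
theorem extremePoint_at_most_one_fractional_purchase_of_sales_eq {V T : ℕ} (s0 : ℝ)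
    (Ls Us : Fin T → ℝ) (Lx Ux Ly Uy : Fin V → Fin T → ℝ)
    (C : Finset (CompCon V T))
    (hLs : ∀ t, 0 ≤ Ls t) (hsLU : ∀ t, Ls t ≤ Us t)
    (hLx : ∀ v t, 0 ≤ Lx v t) (hxLU : ∀ v t, Lx v t ≤ Ux v t)
    (hLy : ∀ v t, 0 ≤ Ly v t) (hyLU : ∀ v t, Ly v t ≤ Uy v t)
    (hC : ∀ c ∈ C, ValidCompCon Lx Ux Ly Uy c)
    (p : WPoint V T)
    (hp : p ∈ Set.extremePoints ℝ (convexHull ℝ (Qset s0 Ls Us Lx Ux Ly Uy C)))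
    (t : Fin T)
    (heq : ∑ v, WPoint.y p v t = prevStock s0 (WPoint.s p) t) :
    ({ v : Fin V | WPoint.x p v t ∉ ({0, Lx v t, Ux v t} : Set ℝ) }).Subsingleton := by
  intro a hamem b hbmem
  by_contra hab
  simp only [Set.mem_setOf_eq, Set.mem_insert_iff, Set.mem_singleton_iff] at hamem hbmem
  push_neg at hamem hbmem
  have hpQ : p ∈ Qset s0 Ls Us Lx Ux Ly Uy C := extremePoints_convexHull_subset hp
  obtain ⟨hbal, hsb, hyb, hcomp, hyz, hxw, hw01, hz01⟩ := id hpQ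
  -- the purchase indicators at `a` and `b` are `1`
  have hwa : WPoint.w p a t = 1 := by
    rcases hw01 a t with h | h
    · exfalso
      have hx := hxw a t
      rw [h, mul_zero, mul_zero] at hx
      exact hamem.1 (le_antisymm hx.2 hx.1)
    · exact h
  have hwb : WPoint.w p b t = 1 := by
    rcases hw01 b t with h | h
    · exfalso
      have hx := hxw b t
      rw [h, mul_zero, mul_zero] at hx
      exact hbmem.1 (le_antisymm hx.2 hx.1)
    · exact h
  -- strict bounds
  have hxa := hxw a t
  have hxb := hxw b t
  rw [hwa, mul_one, mul_one] at hxa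
  rw [hwb, mul_one, mul_one] at hxb
  have hLa : Lx a t < WPoint.x p a t := lt_of_le_of_ne hxa.1 (Ne.symm hamem.2.1)
  have hUa : WPoint.x p a t < Ux a t := lt_of_le_of_ne hxa.2 hamem.2.2
  have hLb : Lx b t < WPoint.x p b t := lt_of_le_of_ne hxb.1 (Ne.symm hbmem.2.1)
  have hUb : WPoint.x p b t < Ux b t := lt_of_le_of_ne hxb.2 hbmem.2.2
  set ε0 : ℝ := min (min (WPoint.x p a t - Lx a t) (Ux a t - WPoint.x p a t))
      (min (WPoint.x p b t - Lx b t) (Ux b t - WPoint.x p b t)) with hε0def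
  have hε0 : 0 < ε0 :=
    lt_min (lt_min (by linarith) (by linarith)) (lt_min (by linarith) (by linarith))
  have e1 : ε0 ≤ WPoint.x p a t - Lx a t := (min_le_left _ _).trans (min_le_left _ _)
  have e2 : ε0 ≤ Ux a t - WPoint.x p a t := (min_le_left _ _).trans (min_le_right _ _)
  have e3 : ε0 ≤ WPoint.x p b t - Lx b t := (min_le_right _ _).trans (min_le_left _ _)
  have e4 : ε0 ≤ Ux b t - WPoint.x p b t := (min_le_right _ _).trans (min_le_right _ _)
  have hQ1 : pert p a b t ε0 ∈ Qset s0 Ls Us Lx Ux Ly Uy C :=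
    pert_mem s0 Ls Us Lx Ux Ly Uy C hC p hpQ a b t hab ε0 hwa hwb hamem hbmem
      (by linarith) (by linarith) (by linarith) (by linarith)
  have hQ2 : pert p a b t (-ε0) ∈ Qset s0 Ls Us Lx Ux Ly Uy C :=
    pert_mem s0 Ls Us Lx Ux Ly Uy C hC p hpQ a b t hab (-ε0) hwa hwb hamem hbmem
      (by linarith) (by linarith) (by linarith) (by linarith)
  obtain ⟨-, hext⟩ := hp
  have hseg : p ∈ openSegment ℝ (pert p a b t ε0) (pert p a b t (-ε0)) :=
    ⟨1/2, 1/2, by norm_num, by norm_num, by norm_num, pert_avg p a b t ε0⟩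
  have heq1 := hext (subset_convexHull ℝ _ hQ1) (subset_convexHull ℝ _ hQ2) hseg
  have hx0 := congrFun (congrFun (congrArg Prod.fst heq1) a) t
  have hx1 : WPoint.x p a t +
      ε0 * (((if a = a then (1:ℝ) else 0) - if a = b then 1 else 0) *
        (if t = t then 1 else 0)) = WPoint.x p a t := hx0
  rw [if_pos rfl, if_neg hab, if_pos rfl] at hx1
  have : ε0 = 0 := by linarith [hx1]
  exact absurd this (ne_of_gt hε0)
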